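/- Let Z be an integer-valued random variable with finite variance σ². Then its Shannon entropy satisfies H(Z) ≤ (1/2) log₂(2πe(σ² + 1/12)). -/

import Mathlib

open MeasureTheory ProbabilityTheory

/-- Shannon entropy (base 2) of an integer-valued random variable. Note that
`Real.logb 2 0 = 0`, so the convention `0·log 0 = 0` is automatic. -/
noncomputable def intEntropy {Ω : Type*} [MeasurableSpace Ω] (μ : Measure Ω)
    (Z : Ω → ℤ) : ℝ :=
  -∑' i : ℤ, (μ (Z ⁻¹' {i})).toReal * Real.logb 2 (μ (Z ⁻¹' {i})).toReal

/-- Gibbs' pointwise inequality. -/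
lemma gibbs_pt {x y : ℝ} (hx : 0 ≤ x) (hy : 0 < y) :
    x - y ≤ x * Real.log x - x * Real.log y := by
  rcases eq_or_lt_of_le hx with h | h
  · simp [← h, hy.le]
  · have h1 : Real.log (y / x) ≤ y / x - 1 :=
      Real.log_le_sub_one_of_pos (by positivity)
    rw [Real.log_div hy.ne' h.ne'] at h1
    have h2 := mul_le_mul_of_nonneg_left h1 h.le
    have h3 : x * (y / x - 1) = y - x := by field_simp
    nlinarith
/-- Integral of a shifted square over a unit interval. -/
lemma interval_sq (c m : ℝ) :
    ∫ x in (c - 1/2)..(c + 1/2), (x - m)^2 = (c - m)^2 + 1/12 := by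
  have h := intervalIntegral.integral_comp_sub_right (a := c - 1/2) (b := c + 1/2)
      (fun x => x ^ 2) m
  have h2 : ∫ x in (c - 1/2 - m)..(c + 1/2 - m), x ^ 2
      = ((c + 1/2 - m) ^ 3 - (c - 1/2 - m) ^ 3) / 3 := by
    rw [integral_pow]; norm_num
  calc ∫ x in (c - 1/2)..(c + 1/2), (x - m)^2
      = ∫ x in (c - 1/2 - m)..(c + 1/2 - m), x ^ 2 := h
    _ = ((c + 1/2 - m) ^ 3 - (c - 1/2 - m) ^ 3) / 3 := h2
    _ = (c - m)^2 + 1/12 := by ring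

/-- Jensen-type lower bound for the Gaussian integral over a unit interval. -/
lemma gauss_interval {v : ℝ} (hv : 0 < v) (m c : ℝ) :
    Real.exp (-(((c - m)^2 + 1/12) / (2*v)))
      ≤ ∫ x in (c - 1/2)..(c + 1/2), Real.exp (-((x - m)^2 / (2*v))) := by
  set t0 : ℝ := ((c - m)^2 + 1/12) / (2*v) with ht0
  have hab : (c - 1/2 : ℝ) ≤ c + 1/2 := by linarith
  have hpt : ∀ x : ℝ, Real.exp (-t0) * (1 + t0 - (x - m)^2 / (2*v))
      ≤ Real.exp (-((x - m)^2 / (2*v))) := by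
    intro x
    have h1 : (t0 - (x - m)^2 / (2*v)) + 1 ≤ Real.exp (t0 - (x - m)^2 / (2*v)) :=
      Real.add_one_le_exp _
    have h2 := mul_le_mul_of_nonneg_left h1 (Real.exp_nonneg (-t0))
    calc Real.exp (-t0) * (1 + t0 - (x - m)^2 / (2*v))
        = Real.exp (-t0) * ((t0 - (x - m)^2 / (2*v)) + 1) := by ring
      _ ≤ Real.exp (-t0) * Real.exp (t0 - (x - m)^2 / (2*v)) := h2
      _ = Real.exp (-((x - m)^2 / (2*v))) := by rw [← Real.exp_add]; ring_nf
  have hg : Continuous fun x : ℝ => Real.exp (-((x - m)^2 / (2*v))) := by fun_prop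
  have hf : Continuous fun x : ℝ => Real.exp (-t0) * (1 + t0 - (x - m)^2 / (2*v)) := by fun_prop
  have hmono := intervalIntegral.integral_mono_on hab
      (hf.intervalIntegrable (μ := MeasureTheory.volume) _ _) (hg.intervalIntegrable (μ := MeasureTheory.volume) _ _) (fun x _ => hpt x)
  refine le_trans (le_of_eq ?_) hmono
  have hsq : IntervalIntegrable (fun x : ℝ => (x - m)^2) MeasureTheory.volume
      (c - 1/2) (c + 1/2) := (by fun_prop : Continuous fun x : ℝ => (x - m)^2).intervalIntegrable _ _
  rw [intervalIntegral.integral_const_mul]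
  have : (∫ x in (c - 1/2)..(c + 1/2), (1 + t0 - (x - m)^2 / (2*v))) = 1 := by
    have hsplit : (fun x : ℝ => 1 + t0 - (x - m)^2 / (2*v))
        = fun x : ℝ => (1 + t0) - (x - m)^2 * (1 / (2*v)) := by funext x; ring
    rw [hsplit, intervalIntegral.integral_sub (intervalIntegrable_const)
        (hsq.mul_const _), intervalIntegral.integral_mul_const,
      intervalIntegral.integral_const, interval_sq]
    have h2v : (2*v) ≠ 0 := by positivity
    simp only [smul_eq_mul]
    field_simp [ht0]
    have ht : t0 * (2*v) = (c - m)^2 + 1/12 := by rw [ht0]; exact div_mul_cancel₀ _ h2v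
    linear_combination 12 * ht
  rw [this, mul_one]

/-- Sum over integers: measure-weighted sums versus the integral. -/
lemma discrete_sum (ν : Measure ℤ) [IsProbabilityMeasure ν] {F : ℤ → ℝ}
    (hF : ∀ i, 0 ≤ F i) (hInt : Integrable F ν) :
    Summable (fun i => (ν {i}).toReal * F i) ∧
      ∑' i, (ν {i}).toReal * F i = ∫ z, F z ∂ν := by
  have hb : ∀ s : Finset ℤ, ∑ i ∈ s, (ν {i}).toReal * F i ≤ ∫ z, F z ∂ν := by
    intro s
    have h1 : ∀ i ∈ s, (ν {i}).toReal * F i = ∫ x in ({i} : Set ℤ), F x ∂ν := by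
      intro i _
      rw [integral_singleton]; simp [mul_comm, measureReal_def]
    rw [Finset.sum_congr rfl h1]
    rw [← integral_biUnion_finset s (fun i _ => measurableSet_singleton i)
        (fun i _ j _ hij => by simp [Function.onFun, Set.disjoint_singleton, hij])
        (fun i _ => hInt.integrableOn)]
    exact setIntegral_le_integral hInt (Filter.Eventually.of_forall hF)
  have hsum : Summable (fun i => (ν {i}).toReal * F i) :=
    summable_of_sum_le (fun i => mul_nonneg ENNReal.toReal_nonneg (hF i)) hb
  refine ⟨hsum, ?_⟩
  rw [integral_countable' hInt]
  simp [smul_eq_mul, measureReal_def]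

/-- Massey's bound: `H(Z) ≤ (1/2)·log₂(2πe(σ² + 1/12))` for integer-valued `Z` with
finite variance `σ²`. -/
theorem stmt16 {Ω : Type*} [MeasurableSpace Ω] (μ : Measure Ω) [IsProbabilityMeasure μ]
    (Z : Ω → ℤ) (hZ : Measurable Z)
    (hL2 : MemLp (fun ω => (Z ω : ℝ)) 2 μ) :
    intEntropy μ Z ≤ (1 / 2) * Real.logb 2
      (2 * Real.pi * Real.exp 1 * (variance (fun ω => (Z ω : ℝ)) μ + 1 / 12)) := by
  classical
  set σ2 := variance (fun ω => (Z ω : ℝ)) μ with hσ2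
  have hσnn : 0 ≤ σ2 := variance_nonneg _ μ
  set ν := μ.map Z with hν
  have hprob : IsProbabilityMeasure ν := Measure.isProbabilityMeasure_map hZ.aemeasurable
  set p : ℤ → ℝ := fun i => (ν {i}).toReal with hpdef
  have hpν : ∀ i, (μ (Z ⁻¹' {i})).toReal = p i := by
    intro i
    show (μ (Z ⁻¹' {i})).toReal = ((Measure.map Z μ) {i}).toReal
    rw [Measure.map_apply hZ (measurableSet_singleton i)]
  have hpnn : ∀ i, 0 ≤ p i := fun i => ENNReal.toReal_nonneg
  have hent : intEntropy μ Z = -∑' i, p i * Real.logb 2 (p i) := by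
    unfold intEntropy
    congr 1
    exact tsum_congr fun i => by rw [hpν i]
  have hlog2 : 0 < Real.log 2 := Real.log_pos (by norm_num)
  by_cases hs : Summable (fun i => p i * Real.log (p i))
  swap
  · -- non-summable case: the entropy is `0` by convention, and the RHS is nonneg
    have hns : ¬ Summable (fun i => p i * Real.logb 2 (p i)) := by
      intro h
      apply hs
      have h2 := h.mul_right (Real.log 2)
      refine h2.congr fun i => ?_
      rw [Real.logb]
      field_simp
    rw [hent, tsum_eq_zero_of_not_summable hns, neg_zero]
    have h1 : (1:ℝ) ≤ 2 * Real.pi * Real.exp 1 * (σ2 + 1/12) := by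
      have hπ := Real.pi_gt_three
      have he : (2:ℝ) ≤ Real.exp 1 := by
        have := Real.add_one_le_exp (1:ℝ); linarith
      have h6 : (6:ℝ) ≤ Real.pi * Real.exp 1 := by nlinarith
      have h7 : (0:ℝ) ≤ σ2 * (Real.pi * Real.exp 1) :=
        mul_nonneg hσnn (by linarith)
      nlinarith
    have h2 := Real.logb_nonneg (b := 2) (by norm_num) h1
    linarith
  -- main case
  set m := ∫ ω, (Z ω : ℝ) ∂μ with hm
  set v := σ2 + 1/12 with hvdef
  have hv : 0 < v := by rw [hvdef]; linarith
  set F : ℤ → ℝ := fun i => ((i:ℝ) - m)^2 with hFdef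
  have hFnn : ∀ i, 0 ≤ F i := fun i => sq_nonneg _
  have hFmeas : Measurable F := measurable_from_top
  have hIntΩ : Integrable (fun ω => ((Z ω : ℝ) - m)^2) μ := by
    have h1 : MemLp (fun ω => (Z ω : ℝ) - m) 2 μ := hL2.sub (memLp_const m)
    simpa using h1.integrable_sq
  have hIntν : Integrable F ν := by
    rw [hν, integrable_map_measure hFmeas.aestronglyMeasurable hZ.aemeasurable]
    exact hIntΩ
  have hvar : ∫ z, F z ∂ν = σ2 := by
    rw [hν, integral_map hZ.aemeasurable hFmeas.aestronglyMeasurable]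
    rw [hσ2, variance_eq_integral hL2.1.aemeasurable]
  obtain ⟨hsum_pF, htsum_pF⟩ := discrete_sum ν hFnn hIntν
  rw [hvar] at htsum_pF
  have hsum_pF' : Summable (fun i => p i * F i) := hsum_pF
  have htsum_pF' : ∑' i, p i * F i = σ2 := htsum_pF
  obtain ⟨hsum_p1, htsum_p1⟩ := discrete_sum ν (F := fun _ => (1:ℝ))
    (fun _ => zero_le_one) (integrable_const 1)
  have hsum_p : Summable p := by simpa using hsum_p1
  have htsum_p : ∑' i, p i = 1 := by
    have h1 : ∫ _ : ℤ, (1:ℝ) ∂ν = 1 := by simp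
    rw [h1] at htsum_p1
    simpa using htsum_p1
  -- comparison distribution
  set s2 := Real.sqrt (2 * Real.pi * v) with hs2
  have h2πv : (0:ℝ) < 2 * Real.pi * v := by positivity
  have hs2pos : 0 < s2 := Real.sqrt_pos.2 h2πv
  set q : ℤ → ℝ := fun i => Real.exp (-((F i + 1/12) / (2*v))) / s2 with hqdef
  have hqpos : ∀ i, 0 < q i := fun i => by
    rw [hqdef]; positivity
  have hg_int : Integrable (fun x : ℝ => Real.exp (-((x - m)^2 / (2*v)))) := by
    have h1 : Integrable (fun x : ℝ => Real.exp (-(1/(2*v)) * x^2)) :=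
      integrable_exp_neg_mul_sq (by positivity)
    have h2 := h1.comp_sub_right m
    refine h2.congr ?_
    filter_upwards with x
    congr 1
    field_simp
  have hg_nn : ∀ x : ℝ, 0 ≤ Real.exp (-((x - m)^2 / (2*v))) := fun x => (Real.exp_pos _).le
  have hg_total : ∫ x : ℝ, Real.exp (-((x - m)^2 / (2*v))) = s2 := by
    have h0 : (fun x : ℝ => Real.exp (-((x - m)^2 / (2*v))))
        = fun x : ℝ => Real.exp (-(1/(2*v)) * (x - m)^2) := by
      funext x; congr 1; field_simp
    rw [h0]
    rw [integral_sub_right_eq_self (fun x : ℝ => Real.exp (-(1/(2*v)) * x^2)) m]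
    rw [integral_gaussian]
    rw [hs2]
    congr 1
    field_simp
  have hq_bound : ∀ s : Finset ℤ, ∑ i ∈ s, q i ≤ 1 := by
    intro s
    have h1 : ∀ i ∈ s, q i ≤
        (∫ x in Set.Ioc ((i:ℝ) - 1/2) ((i:ℝ) + 1/2), Real.exp (-((x - m)^2 / (2*v)))) / s2 := by
      intro i _
      have h2 := gauss_interval hv m (i:ℝ)
      rw [intervalIntegral.integral_of_le (by linarith : (i:ℝ) - 1/2 ≤ (i:ℝ) + 1/2)] at h2
      show Real.exp (-((F i + 1/12) / (2*v))) / s2 ≤ _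
      apply div_le_div_of_nonneg_right ?_ hs2pos.le
      simpa [hFdef] using h2
    calc ∑ i ∈ s, q i
        ≤ ∑ i ∈ s, (∫ x in Set.Ioc ((i:ℝ) - 1/2) ((i:ℝ) + 1/2),
            Real.exp (-((x - m)^2 / (2*v)))) / s2 := Finset.sum_le_sum h1
      _ = (∑ i ∈ s, ∫ x in Set.Ioc ((i:ℝ) - 1/2) ((i:ℝ) + 1/2),
            Real.exp (-((x - m)^2 / (2*v)))) / s2 := by rw [Finset.sum_div]
      _ ≤ s2 / s2 := by
          apply div_le_div_of_nonneg_right ?_ hs2pos.le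
          rw [← integral_biUnion_finset s
              (fun i _ => measurableSet_Ioc)
              (fun i hi j hj hij => by
                simp only [Function.onFun]
                rw [Set.Ioc_disjoint_Ioc]
                rcases lt_or_gt_of_ne hij with h | h
                · have : (i:ℝ) + 1 ≤ (j:ℝ) := by exact_mod_cast h
                  calc min ((i:ℝ) + 1/2) ((j:ℝ) + 1/2) ≤ (i:ℝ) + 1/2 := min_le_left _ _
                    _ ≤ (j:ℝ) - 1/2 := by linarith
                    _ ≤ max ((i:ℝ) - 1/2) ((j:ℝ) - 1/2) := le_max_right _ _
                · have : (j:ℝ) + 1 ≤ (i:ℝ) := by exact_mod_cast h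
                  calc min ((i:ℝ) + 1/2) ((j:ℝ) + 1/2) ≤ (j:ℝ) + 1/2 := min_le_right _ _
                    _ ≤ (i:ℝ) - 1/2 := by linarith
                    _ ≤ max ((i:ℝ) - 1/2) ((j:ℝ) - 1/2) := le_max_left _ _)
              (fun i _ => hg_int.integrableOn)]
          rw [← hg_total]
          exact setIntegral_le_integral hg_int (Filter.Eventually.of_forall hg_nn)
      _ = 1 := div_self hs2pos.ne'
  have hsum_q : Summable q := summable_of_sum_le (fun i => (hqpos i).le) hq_bound
  have htsum_q : ∑' i, q i ≤ 1 := Summable.tsum_le_of_sum_le hsum_q hq_bound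
  -- logarithm of q
  have hlogq : ∀ i, Real.log (q i) = -((F i + 1/12) / (2*v)) - Real.log s2 := by
    intro i
    rw [hqdef]
    rw [Real.log_div (Real.exp_ne_zero _) hs2pos.ne', Real.log_exp]
  have hrw : (fun i => p i * Real.log (q i))
      = fun i => -((p i * F i) / (2*v)) - (1/12/(2*v) + Real.log s2) * p i := by
    funext i
    rw [hlogq i]
    have h2v : (2*v) ≠ 0 := by positivity
    field_simp
    ring
  have hsum_plogq : Summable (fun i => p i * Real.log (q i)) := by
    rw [hrw]
    exact ((hsum_pF'.div_const _).neg).sub (hsum_p.mul_left _)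
  have htsum_plogq : ∑' i, p i * Real.log (q i)
      = -(σ2 / (2*v)) - (1/12/(2*v) + Real.log s2) := by
    rw [hrw]
    rw [Summable.tsum_sub ((hsum_pF'.div_const _).neg) (hsum_p.mul_left _)]
    rw [tsum_neg, tsum_div_const, htsum_pF', tsum_mul_left, htsum_p, mul_one]
  -- Gibbs' inequality
  have hgibbs : ∀ i, 0 ≤ (p i * Real.log (p i) - p i * Real.log (q i)) - (p i - q i) := by
    intro i
    have := gibbs_pt (hpnn i) (hqpos i)
    linarith
  have h0 : 0 ≤ ∑' i, ((p i * Real.log (p i) - p i * Real.log (q i)) - (p i - q i)) :=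
    tsum_nonneg hgibbs
  rw [Summable.tsum_sub (hs.sub hsum_plogq) (hsum_p.sub hsum_q),
    Summable.tsum_sub hs hsum_plogq, Summable.tsum_sub hsum_p hsum_q,
    htsum_p, htsum_plogq] at h0
  have hL : -(∑' i, p i * Real.log (p i)) ≤ σ2/(2*v) + 1/12/(2*v) + Real.log s2 := by
    linarith
  -- final arithmetic
  have harith : σ2/(2*v) + 1/12/(2*v) + Real.log s2
      = (1/2) * Real.log (2*Real.pi*Real.exp 1 * v) := by
    have h1 : σ2/(2*v) + 1/12/(2*v) = 1/2 := by
      rw [← add_div, hvdef]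
      rw [div_eq_iff (by positivity : (2*(σ2+1/12):ℝ) ≠ 0)]
      ring
    have h2 : Real.log s2 = (1/2) * Real.log (2*Real.pi*v) := by
      rw [hs2, Real.log_sqrt h2πv.le]
      ring
    have h3 : Real.log (2*Real.pi*Real.exp 1*v) = Real.log (2*Real.pi*v) + 1 := by
      rw [show 2*Real.pi*Real.exp 1*v = (2*Real.pi*v) * Real.exp 1 by ring,
        Real.log_mul h2πv.ne' (Real.exp_ne_zero _), Real.log_exp]
    rw [h1, h2, h3]
    ring
  -- conclude
  rw [hent]
  have hconv : ∑' i, p i * Real.logb 2 (p i) = (∑' i, p i * Real.log (p i)) / Real.log 2 := by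
    rw [← tsum_div_const]
    exact tsum_congr fun i => by rw [Real.logb]; ring
  rw [hconv]
  have hargs : 2 * Real.pi * Real.exp 1 * (σ2 + 1/12) = 2*Real.pi*Real.exp 1 * v := by
    rw [hvdef]
  rw [hargs, Real.logb]
  calc -((∑' i, p i * Real.log (p i)) / Real.log 2)
      = (-(∑' i, p i * Real.log (p i))) / Real.log 2 := by ring
    _ ≤ ((1/2) * Real.log (2*Real.pi*Real.exp 1 * v)) / Real.log 2 :=
        div_le_div_of_nonneg_right (by rw [← harith]; exact hL) hlog2.le
    _ = 1/2 * (Real.log (2*Real.pi*Real.exp 1 * v) / Real.log 2) := by ring
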